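/- Assume the Mecke identity with Papangelou intensity r and condition (G1): for every Λ ∈ B₀(X), ∫_Γ ∑_{x∈γ∩Λ} d(x,γ\{x}) μ(dγ) < ∞. If F, G ∈ FC_b and F = 0 μ-almost everywhere, then ℰ_G(F,G) = 0, where ℰ_G(F,G) := ∫_Γ ∑_{x∈γ} d(x,γ\{x}) (D_x^- F)(γ)(D_x^- G)(γ) μ(dγ). -/

import Mathlib

open MeasureTheory Set ENNReal Filter Topology

noncomputable section

/-- The configuration space over `X`: the set of all locally finite subsets of `X`. -/
def Config (X : Type*) [TopologicalSpace X] : Type _ :=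
  {γ : Set X // ∀ K : Set X, IsCompact K → (γ ∩ K).Finite}

namespace Config

variable {X : Type*} [TopologicalSpace X]

/-- Removal of a point from a configuration, `γ \ {x}`. -/
def erase (γ : Config X) (x : X) : Config X :=
  ⟨γ.1 \ {x}, fun K hK => (γ.2 K hK).subset fun _ hz => ⟨hz.1.1, hz.2⟩⟩

/-- Insertion of a point into a configuration, `γ ∪ {x}`. -/
def ins (γ : Config X) (x : X) : Config X :=
  ⟨insert x γ.1, fun K hK => ((γ.2 K hK).insert x).subset (by
    rintro z ⟨hz1, hz2⟩
    rcases Set.mem_insert_iff.mp hz1 with rfl | h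
    · exact Set.mem_insert _ _
    · exact Set.mem_insert_of_mem _ ⟨h, hz2⟩)⟩

end Config

variable {X : Type*} [TopologicalSpace X]

/-- Cylinder functions `FC_b`: `F(γ) = g(⟨φ₁,γ⟩, …, ⟨φ_N,γ⟩)` with the `φᵢ` continuous
with compact support and `g` bounded continuous; here `⟨φ,γ⟩ = ∑_{x∈γ} φ(x)`. -/
def IsCylinder (F : Config X → ℝ) : Prop :=
  ∃ (N : ℕ) (φ : Fin N → X → ℝ) (g : (Fin N → ℝ) → ℝ),
    (∀ i, Continuous (φ i)) ∧ (∀ i, HasCompactSupport (φ i)) ∧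
      Continuous g ∧ (∃ C : ℝ, ∀ v, |g v| ≤ C) ∧
      ∀ γ : Config X, F γ = g fun i => ∑' x : γ.1, φ i x

/-- `(D_x^- F)(γ) = F(γ \ {x}) - F(γ)`. -/
def Dm (F : Config X → ℝ) (x : X) (γ : Config X) : ℝ := F (γ.erase x) - F γ

/-- `(D_x^+ F)(γ) = F(γ ∪ {x}) - F(γ)`. -/
def Dp (F : Config X → ℝ) (x : X) (γ : Config X) : ℝ := F (γ.ins x) - F γ

/-- `(D_{xy}^{-+} F)(γ) = F((γ \ {x}) ∪ {y}) - F(γ)`. -/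
def Dpm (F : Config X → ℝ) (x y : X) (γ : Config X) : ℝ := F ((γ.erase x).ins y) - F γ

variable [MeasurableSpace X]

/-- `Λ ∈ B₀(X)`: a relatively compact Borel set. -/
def IsB0 (Λ : Set X) : Prop := MeasurableSet Λ ∧ IsCompact (closure Λ)

/-- The σ-algebra on `Config X` generated by the counting maps `γ ↦ |γ ∩ Λ|`, `Λ ∈ B₀(X)`. -/
instance : MeasurableSpace (Config X) :=
  ⨆ (Λ : Set X) (_ : IsB0 Λ),
    MeasurableSpace.comap (fun γ : Config X => (γ.1 ∩ Λ).ncard) ⊤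

/-- The Mecke identity: `r` is a Papangelou intensity for `μ`, i.e.
`∫ ∑_{x∈γ} H(x,γ) μ(dγ) = ∫ ∫ r(x,γ) H(x,γ∪{x}) ν(dx) μ(dγ)` for measurable `H ≥ 0`. -/
def MeckeIdentity (ν : Measure X) (μ : Measure (Config X)) (r : X → Config X → ℝ) : Prop :=
  ∀ H : X → Config X → ℝ≥0∞, Measurable (fun p : X × Config X => H p.1 p.2) →
    ∫⁻ γ, ∑' x : γ.1, H (x : X) γ ∂μ =
      ∫⁻ γ, ∫⁻ x, ENNReal.ofReal (r x γ) * H x (γ.ins x) ∂ν ∂μ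

/-- Condition (G1): `∫ ∑_{x∈γ∩Λ} d(x,γ\{x}) μ(dγ) < ∞` for every `Λ ∈ B₀(X)`. -/
def CondG1 (μ : Measure (Config X)) (d : X → Config X → ℝ) : Prop :=
  ∀ Λ : Set X, IsB0 Λ →
    ∫⁻ γ, ∑' x : ↥(γ.1 ∩ Λ), ENNReal.ofReal (d (x : X) (γ.erase (x : X))) ∂μ < ⊤

/-- Condition (K1): `∫ ∑_{x∈γ} ∫ c(x,y,γ\{x})(χ_Λ(x)+χ_Λ(y)) ν(dy) μ(dγ) < ∞`
for every `Λ ∈ B₀(X)`. -/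
def CondK1 (ν : Measure X) (μ : Measure (Config X)) (c : X → X → Config X → ℝ) : Prop :=
  ∀ Λ : Set X, IsB0 Λ →
    ∫⁻ γ, ∑' x : γ.1, ∫⁻ y,
        ENNReal.ofReal (c (x : X) y (γ.erase (x : X))) *
          (Λ.indicator (1 : X → ℝ≥0∞) (x : X) + Λ.indicator (1 : X → ℝ≥0∞) y) ∂ν ∂μ < ⊤

/-- The Glauber Dirichlet form `ℰ_G(F,G)`. -/
def glauberE (μ : Measure (Config X)) (d : X → Config X → ℝ) (F G : Config X → ℝ) : ℝ :=
  ∫ γ, (∑' x : γ.1, d (x : X) (γ.erase (x : X)) * Dm F (x : X) γ * Dm G (x : X) γ) ∂μ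

/-- The Kawasaki Dirichlet form `ℰ_K(F,G)`. -/
def kawasakiE (ν : Measure X) (μ : Measure (Config X)) (c : X → X → Config X → ℝ)
    (F G : Config X → ℝ) : ℝ :=
  ∫ γ, (∑' x : γ.1, ∫ y, c (x : X) y (γ.erase (x : X)) * Dpm F (x : X) y γ *
    Dpm G (x : X) y γ ∂ν) ∂μ

section Aux

lemma Config.finite_inter {γ : Config X} {Λ : Set X} (hΛ : IsB0 Λ) : (γ.1 ∩ Λ).Finite :=
  (γ.2 (closure Λ) hΛ.2).subset fun x hx => ⟨hx.1, subset_closure hx.2⟩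

lemma measurable_count {Λ : Set X} (hΛ : IsB0 Λ) :
    Measurable fun γ : Config X => (γ.1 ∩ Λ).ncard := by
  intro s _
  have hle : MeasurableSpace.comap (fun γ : Config X => (γ.1 ∩ Λ).ncard) ⊤ ≤
      (inferInstance : MeasurableSpace (Config X)) :=
    le_iSup₂ (f := fun (Λ : Set X) (_ : IsB0 Λ) =>
      MeasurableSpace.comap (fun γ : Config X => (γ.1 ∩ Λ).ncard) ⊤) Λ hΛ
  exact hle _ ⟨s, trivial, rfl⟩

lemma measurable_toConfig {α : Type*} [MeasurableSpace α] {f : α → Config X}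
    (h : ∀ Λ : Set X, IsB0 Λ → Measurable fun a => ((f a).1 ∩ Λ).ncard) :
    Measurable f := by
  rw [measurable_iff_comap_le]
  show MeasurableSpace.comap f
      (⨆ (Λ : Set X) (_ : IsB0 Λ),
        MeasurableSpace.comap (fun γ : Config X => (γ.1 ∩ Λ).ncard) ⊤) ≤ _
  rw [MeasurableSpace.comap_iSup]
  refine iSup_le fun Λ => ?_
  rw [MeasurableSpace.comap_iSup]
  refine iSup_le fun hΛ => ?_
  rw [MeasurableSpace.comap_comp]
  intro s hs
  obtain ⟨t, -, rfl⟩ := hs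
  exact h Λ hΛ trivial

variable [T2Space X] [LocallyCompactSpace X]

lemma Config.isClosed (γ : Config X) : IsClosed γ.1 := by
  rw [← isOpen_compl_iff, isOpen_iff_forall_mem_open]
  intro x hx
  obtain ⟨N, hNc, hN⟩ := exists_compact_mem_nhds x
  refine ⟨interior N \ (γ.1 ∩ N), ?_, isOpen_interior.sdiff (γ.2 N hNc).isClosed, ?_⟩
  · intro y hy hyγ
    exact hy.2 ⟨hyγ, interior_subset hy.1⟩
  · exact ⟨mem_interior_iff_mem_nhds.mpr hN, fun hc => hx hc.1⟩

lemma exists_basic [SecondCountableTopology X] {x : X} {V : Set X} (hV : IsOpen V)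
    (hx : x ∈ V) : ∃ U ∈ TopologicalSpace.countableBasis X,
      x ∈ U ∧ U ⊆ V ∧ IsCompact (closure U) := by
  obtain ⟨K, hKc, hxK, hKV⟩ := exists_compact_subset hV hx
  obtain ⟨U, hU, hxU, hUK⟩ :=
    (TopologicalSpace.isBasis_countableBasis X).exists_subset_of_mem_open hxK isOpen_interior
  refine ⟨U, hU, hxU, (hUK.trans interior_subset).trans hKV, ?_⟩
  exact hKc.of_isClosed_subset isClosed_closure
    (closure_minimal (hUK.trans interior_subset) hKc.isClosed)

lemma config_countable [SecondCountableTopology X] (γ : Config X) : γ.1.Countable := by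
  have hsub : γ.1 ⊆ ⋃ U ∈ {U ∈ TopologicalSpace.countableBasis X | IsCompact (closure U)},
      γ.1 ∩ U := by
    intro x hx
    obtain ⟨U, hU, hxU, -, hUc⟩ := exists_basic isOpen_univ (mem_univ x)
    exact mem_biUnion ⟨hU, hUc⟩ ⟨hx, hxU⟩
  refine Set.Countable.mono hsub (Set.Countable.biUnion
    ((TopologicalSpace.countable_countableBasis X).mono (sep_subset _ _)) fun U hU => ?_)
  exact ((γ.2 (closure U) hU.2).subset fun y hy => ⟨hy.1, subset_closure hy.2⟩).countable

lemma measurable_memSet [SecondCountableTopology X] [OpensMeasurableSpace X] :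
    MeasurableSet {p : X × Config X | p.1 ∈ p.2.1} := by
  have key : {p : X × Config X | p.1 ∈ p.2.1} =
      ⋂ U ∈ {U ∈ TopologicalSpace.countableBasis X | IsCompact (closure U)},
        {p : X × Config X | p.1 ∈ U → (p.2.1 ∩ U).ncard ≠ 0} := by
    ext p
    simp only [mem_iInter, mem_setOf_eq, mem_sep_iff]
    constructor
    · rintro hp U ⟨hUb, hUc⟩ hxU h0
      have hfin : (p.2.1 ∩ U).Finite :=
        (p.2.2 (closure U) hUc).subset fun y hy => ⟨hy.1, subset_closure hy.2⟩
      rw [Set.ncard_eq_zero hfin] at h0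
      exact absurd h0 (Set.Nonempty.ne_empty ⟨p.1, hp, hxU⟩)
    · intro h
      by_contra hx
      obtain ⟨U, hUb, hxU, hUsub, hUc⟩ :=
        exists_basic (Config.isClosed p.2).isOpen_compl hx
      refine h U ⟨hUb, hUc⟩ hxU ?_
      have : p.2.1 ∩ U = ∅ := by
        rw [Set.eq_empty_iff_forall_notMem]
        exact fun y hy => hUsub hy.2 hy.1
      simp [this]
  rw [key]
  refine MeasurableSet.biInter
    ((TopologicalSpace.countable_countableBasis X).mono (sep_subset _ _)) fun U hU => ?_
  have hUo : IsOpen U := TopologicalSpace.isOpen_of_mem_countableBasis hU.1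
  have hB0 : IsB0 U := ⟨hUo.measurableSet, hU.2⟩
  have : {p : X × Config X | p.1 ∈ U → (p.2.1 ∩ U).ncard ≠ 0} =
      (Prod.fst ⁻¹' U)ᶜ ∪
        Prod.snd ⁻¹' {γ : Config X | (γ.1 ∩ U).ncard ≠ 0} := by
    ext p
    simp only [mem_setOf_eq, mem_union, mem_compl_iff, mem_preimage]
    tauto
  rw [this]
  exact ((hUo.measurableSet.preimage measurable_fst).compl).union
    (measurable_snd ((measurable_count hB0) (measurableSet_singleton 0).compl))

lemma measurable_eraseMap [SecondCountableTopology X] [OpensMeasurableSpace X] :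
    Measurable fun p : X × Config X => p.2.erase p.1 := by
  classical
  refine measurable_toConfig fun Λ hΛ => ?_
  have heq : ∀ p : X × Config X, (((p.2.erase p.1).1) ∩ Λ).ncard =
      if p.1 ∈ p.2.1 ∧ p.1 ∈ Λ then (p.2.1 ∩ Λ).ncard - 1 else (p.2.1 ∩ Λ).ncard := by
    intro p
    have hset : (p.2.erase p.1).1 ∩ Λ = (p.2.1 ∩ Λ) \ {p.1} := by
      ext y
      simp only [Config.erase, Set.mem_inter_iff, Set.mem_diff, Set.mem_singleton_iff]
      tauto
    rw [hset]
    by_cases h : p.1 ∈ p.2.1 ∧ p.1 ∈ Λ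
    · rw [if_pos h, Set.ncard_diff_singleton_of_mem (Set.mem_inter h.1 h.2)]
    · rw [if_neg h, Set.diff_singleton_eq_self fun hc => h ⟨hc.1, hc.2⟩]
  simp only [heq]
  have hS : MeasurableSet {p : X × Config X | p.1 ∈ p.2.1 ∧ p.1 ∈ Λ} := by
    have : {p : X × Config X | p.1 ∈ p.2.1 ∧ p.1 ∈ Λ} =
        {p : X × Config X | p.1 ∈ p.2.1} ∩ Prod.fst ⁻¹' Λ := rfl
    rw [this]
    exact measurable_memSet.inter (hΛ.1.preimage measurable_fst)
  exact Measurable.ite hS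
    ((measurable_from_top (f := fun n : ℕ => n - 1)).comp
      ((measurable_count hΛ).comp measurable_snd))
    ((measurable_count hΛ).comp measurable_snd)

lemma measurable_cylSum [OpensMeasurableSpace X] {φ : X → ℝ} (hc : Continuous φ)
    (hs : HasCompactSupport φ) : Measurable fun γ : Config X => ∑' x : γ.1, φ x := by
  classical
  have hKcl : IsClosed (tsupport φ) := isClosed_tsupport φ
  have hKco : IsCompact (tsupport φ) := hs
  have hfin : ∀ γ : Config X, (γ.1 ∩ tsupport φ).Finite := fun γ => γ.2 _ hKco
  have htsum : ∀ (ψ : X → ℝ), tsupport ψ ⊆ tsupport φ → ∀ γ : Config X,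
      (∑' x : γ.1, ψ x) = ∑ x ∈ (hfin γ).toFinset, ψ x := by
    intro ψ hψ γ
    rw [tsum_subtype]
    have h0 : ∀ b ∉ (hfin γ).toFinset, γ.1.indicator ψ b = 0 := by
      intro b hb
      rw [Set.Finite.mem_toFinset] at hb
      by_cases hbγ : b ∈ γ.1
      · have hbK : b ∉ tsupport φ := fun h => hb ⟨hbγ, h⟩
        rw [Set.indicator_of_mem hbγ, image_eq_zero_of_notMem_tsupport fun h => hbK (hψ h)]
      · exact Set.indicator_of_notMem hbγ _
    rw [tsum_eq_sum h0]
    refine Finset.sum_congr rfl fun x hx => ?_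
    rw [Set.Finite.mem_toFinset] at hx
    exact Set.indicator_of_mem hx.1 _
  have hsimple : ∀ s : MeasureTheory.SimpleFunc X ℝ,
      Measurable fun γ : Config X => ∑ x ∈ (hfin γ).toFinset, s x := by
    intro s
    have hform : ∀ γ : Config X, (∑ x ∈ (hfin γ).toFinset, s x) =
        ∑ c ∈ s.range, c * ((γ.1 ∩ (s ⁻¹' {c} ∩ tsupport φ)).ncard : ℝ) := by
      intro γ
      have h1 : ∀ x ∈ (hfin γ).toFinset, s x = ∑ c ∈ s.range, if s x = c then c else 0 := by
        intro x _
        simp [Finset.sum_ite_eq, s.mem_range_self x]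
      rw [Finset.sum_congr rfl h1, Finset.sum_comm]
      refine Finset.sum_congr rfl fun c _ => ?_
      have h2 : (∑ x ∈ (hfin γ).toFinset, if s x = c then c else 0) =
          ∑ x ∈ (hfin γ).toFinset.filter (fun x => s x = c), c := (Finset.sum_filter _ _).symm
      rw [h2, Finset.sum_const, nsmul_eq_mul, mul_comm]
      congr 1
      have hcoe : (((hfin γ).toFinset.filter (fun x => s x = c) : Finset X) : Set X) =
          γ.1 ∩ (s ⁻¹' {c} ∩ tsupport φ) := by
        ext y
        simp only [Finset.coe_filter, Set.Finite.mem_toFinset, mem_setOf_eq,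
          Set.mem_inter_iff, Set.mem_preimage, Set.mem_singleton_iff]
        tauto
      rw [← hcoe, Set.ncard_coe_finset]
    simp only [hform]
    refine Finset.measurable_sum _ fun c _ => ?_
    have hB0 : IsB0 (s ⁻¹' {c} ∩ tsupport φ) := by
      refine ⟨(s.measurableSet_fiber c).inter hKcl.measurableSet, ?_⟩
      exact hKco.of_isClosed_subset isClosed_closure
        (closure_minimal Set.inter_subset_right hKcl)
    exact measurable_const.mul (measurable_from_top.comp (measurable_count hB0))
  have hφm : Measurable φ := hc.measurable
  have hlim : ∀ γ : Config X,
      Filter.Tendsto (fun n => ∑ x ∈ (hfin γ).toFinset,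
          MeasureTheory.SimpleFunc.approxOn φ hφm Set.univ 0 (Set.mem_univ 0) n x)
        Filter.atTop (nhds (∑ x ∈ (hfin γ).toFinset, φ x)) := fun γ =>
    tendsto_finset_sum _ fun x _ =>
      MeasureTheory.SimpleFunc.tendsto_approxOn hφm (Set.mem_univ 0) (by simp)
  have hmeas : Measurable fun γ : Config X => ∑ x ∈ (hfin γ).toFinset, φ x :=
    measurable_of_tendsto_metrizable
      (fun n => hsimple (MeasureTheory.SimpleFunc.approxOn φ hφm Set.univ 0 (Set.mem_univ 0) n))
      (tendsto_pi_nhds.mpr hlim)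
  have : (fun γ : Config X => ∑' x : γ.1, φ x) =
      fun γ : Config X => ∑ x ∈ (hfin γ).toFinset, φ x :=
    funext (htsum φ subset_rfl)
  rw [this]
  exact hmeas

lemma measurable_of_isCylinder [OpensMeasurableSpace X] {F : Config X → ℝ}
    (hF : IsCylinder F) : Measurable F := by
  obtain ⟨N, φ, g, hφc, hφs, hg, -, hrep⟩ := hF
  have : F = fun γ => g fun i => ∑' x : γ.1, φ i x := funext hrep
  rw [this]
  exact hg.measurable.comp
    (measurable_pi_lambda _ fun i => measurable_cylSum (hφc i) (hφs i))

end Aux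

/-- Under the Mecke identity and condition (G1), if `F, G ∈ FC_b` and `F = 0` μ-a.e.,
then `ℰ_G(F,G) = 0`. -/
theorem glauber_form_well_defined {X : Type*} [TopologicalSpace X]
    [LocallyCompactSpace X] [SecondCountableTopology X] [T2Space X]
    [MeasurableSpace X] [BorelSpace X]
    (ν : Measure X) [ν.Regular] [NullSingletonClass ν]
    (μ : Measure (Config X)) [IsProbabilityMeasure μ]
    (r : X → Config X → ℝ) (hr0 : ∀ x γ, 0 ≤ r x γ)
    (hrm : Measurable fun p : X × Config X => r p.1 p.2)
    (hMecke : MeckeIdentity ν μ r)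
    (d : X → Config X → ℝ) (hd0 : ∀ x γ, 0 ≤ d x γ)
    (hdm : Measurable fun p : X × Config X => d p.1 p.2)
    (hG1 : CondG1 μ d)
    (F G : Config X → ℝ) (hF : IsCylinder F) (hG : IsCylinder G)
    (hF0 : ∀ᵐ γ ∂μ, F γ = 0) :
    glauberE μ d F G = 0 := by
  classical
  set Ψ : Config X → ℝ := fun γ =>
    ∑' x : γ.1, d (x : X) (γ.erase (x : X)) * Dm F (x : X) γ * Dm G (x : X) γ with hΨdef
  have hFm : Measurable F := measurable_of_isCylinder hF
  have hGm : Measurable G := measurable_of_isCylinder hG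
  have hErase : Measurable fun p : X × Config X => p.2.erase p.1 := measurable_eraseMap
  set H : X → Config X → ℝ≥0∞ := fun x γ =>
    ENNReal.ofReal |d x (γ.erase x) * F (γ.erase x) * (G (γ.erase x) - G γ)| with hHdef
  have hHm : Measurable fun p : X × Config X => H p.1 p.2 := by
    simp only [hHdef]
    have h1 : Measurable fun p : X × Config X => d p.1 (p.2.erase p.1) :=
      hdm.comp (measurable_fst.prodMk hErase)
    have h2 : Measurable fun p : X × Config X => F (p.2.erase p.1) := hFm.comp hErase
    have h3 : Measurable fun p : X × Config X => G (p.2.erase p.1) := hGm.comp hErase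
    have h4 : Measurable fun p : X × Config X => G p.2 := hGm.comp measurable_snd
    exact (((h1.mul h2).mul (h3.sub h4)).abs).ennreal_ofReal
  have hRHS : ∫⁻ γ, ∫⁻ x, ENNReal.ofReal (r x γ) * H x (γ.ins x) ∂ν ∂μ = 0 := by
    have hin : ∀ᵐ γ ∂μ, (∫⁻ x, ENNReal.ofReal (r x γ) * H x (γ.ins x) ∂ν) = 0 := by
      filter_upwards [hF0] with γ hγ
      have hnull : ν γ.1 = 0 := (config_countable γ).measure_zero ν
      have hae : ∀ᵐ x ∂ν, x ∉ γ.1 := by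
        rw [ae_iff]
        simpa using hnull
      have hz : ∀ᵐ x ∂ν, ENNReal.ofReal (r x γ) * H x (γ.ins x) = 0 := by
        filter_upwards [hae] with x hx
        have h1 : (γ.ins x).erase x = γ := by
          apply Subtype.ext
          show (insert x γ.1) \ {x} = γ.1
          exact Set.insert_diff_self_of_notMem hx
        simp only [hHdef, h1, hγ, mul_zero, zero_mul, abs_zero, ENNReal.ofReal_zero]
      rw [lintegral_congr_ae hz, lintegral_zero]
    rw [lintegral_congr_ae hin, lintegral_zero]
  have hLHS : ∫⁻ γ, ∑' x : γ.1, H (x : X) γ ∂μ = 0 := (hMecke H hHm).trans hRHS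
  obtain ⟨Nset, hNsub, hNm, hNnull⟩ :=
    exists_measurable_superset_of_null (ae_iff.mp hF0)
  have hbound : ∀ γ : Config X, ENNReal.ofReal |Ψ γ| ≤
      (∑' x : γ.1, H (x : X) γ) + Nset.indicator (fun _ => (⊤ : ℝ≥0∞)) γ := by
    intro γ
    by_cases hγN : γ ∈ Nset
    · simp [Set.indicator_of_mem hγN]
    · rw [Set.indicator_of_notMem hγN, add_zero]
      have hFγ : F γ = 0 := by
        by_contra h
        exact hγN (hNsub h)
      have hterm : ∀ x : γ.1, d (x : X) (γ.erase (x : X)) * Dm F (x : X) γ * Dm G (x : X) γ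
          = d (x : X) (γ.erase (x : X)) * F (γ.erase (x : X)) *
            (G (γ.erase (x : X)) - G γ) := by
        intro x
        simp [Dm, hFγ]
      by_cases hsum : Summable fun x : γ.1 =>
          d (x : X) (γ.erase (x : X)) * Dm F (x : X) γ * Dm G (x : X) γ
      · have habs : Summable fun x : γ.1 =>
            |d (x : X) (γ.erase (x : X)) * Dm F (x : X) γ * Dm G (x : X) γ| := hsum.abs
        have h1 : |Ψ γ| ≤ ∑' x : γ.1,
            |d (x : X) (γ.erase (x : X)) * Dm F (x : X) γ * Dm G (x : X) γ| := by
          simpa only [Real.norm_eq_abs] using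
            norm_tsum_le_tsum_norm (f := fun x : γ.1 =>
              d (x : X) (γ.erase (x : X)) * Dm F (x : X) γ * Dm G (x : X) γ)
              (by simpa only [Real.norm_eq_abs] using habs)
        calc ENNReal.ofReal |Ψ γ|
            ≤ ENNReal.ofReal (∑' x : γ.1,
              |d (x : X) (γ.erase (x : X)) * Dm F (x : X) γ * Dm G (x : X) γ|) :=
              ENNReal.ofReal_le_ofReal h1
          _ = ∑' x : γ.1, ENNReal.ofReal
              |d (x : X) (γ.erase (x : X)) * Dm F (x : X) γ * Dm G (x : X) γ| :=
              ENNReal.ofReal_tsum_of_nonneg (fun x => abs_nonneg _) habs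
          _ = ∑' x : γ.1, H (x : X) γ := by
              refine tsum_congr fun x => ?_
              rw [hHdef, hterm x]
      · have : Ψ γ = 0 := tsum_eq_zero_of_not_summable hsum
        simp [this]
  have hone : ∫⁻ γ, ENNReal.ofReal |Ψ γ| ∂μ = 0 := by
    refine le_antisymm ?_ zero_le
    calc ∫⁻ γ, ENNReal.ofReal |Ψ γ| ∂μ
        ≤ ∫⁻ γ, ((∑' x : γ.1, H (x : X) γ) +
            Nset.indicator (fun _ => (⊤ : ℝ≥0∞)) γ) ∂μ := lintegral_mono hbound
      _ = (∫⁻ γ, ∑' x : γ.1, H (x : X) γ ∂μ) +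
            ∫⁻ γ, Nset.indicator (fun _ => (⊤ : ℝ≥0∞)) γ ∂μ :=
          lintegral_add_right _ (measurable_const.indicator hNm)
      _ = 0 := by
          rw [hLHS, lintegral_indicator hNm _, setLIntegral_const, hNnull,
            mul_zero, zero_add]
  have hgl : glauberE μ d F G = ∫ γ, Ψ γ ∂μ := rfl
  rw [hgl]
  by_cases hae : AEStronglyMeasurable Ψ μ
  · have haem : AEMeasurable (fun γ => ENNReal.ofReal |Ψ γ|) μ :=
      (ENNReal.measurable_ofReal.comp continuous_abs.measurable).comp_aemeasurable
        hae.aemeasurable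
    have h0 : (fun γ => ENNReal.ofReal |Ψ γ|) =ᵐ[μ] 0 :=
      (lintegral_eq_zero_iff' haem).mp hone
    have hΨ0 : Ψ =ᵐ[μ] 0 := by
      filter_upwards [h0] with γ h
      have h' : |Ψ γ| ≤ 0 := ENNReal.ofReal_eq_zero.mp h
      exact abs_eq_zero.mp (le_antisymm h' (abs_nonneg _))
    exact integral_eq_zero_of_ae hΨ0
  · exact integral_non_aestronglyMeasurable hae

end
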